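/- arXiv:2208.10298 — 3 statements merged into one kernel-verified Lean document; each statement's English description precedes it below -/
import Mathlib

section
/- For block size b dividing n and any permutation δ ∈ S_n, the number of permutations π ∈ S_n with d_ee(π,δ) ≤ r satisfies |{π : d_ee(π,δ) ≤ r}| ≤ C(n,r)·r!·b^{n−r}. -/
/-- Block index (1-based) of 1-based position `i+1` for block size `b`. -/
def blk (b : ℕ) {n : ℕ} (i : Fin n) : ℕ := (i.val + b) / b

/-- External errors metric. -/
def dEE (b : ℕ) {n : ℕ} (π δ : Equiv.Perm (Fin n)) : ℕ :=
  (Finset.univ.filter (fun i => blk b (π i) ≠ blk b (δ i))).card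

open Finset in
lemma fixed_set_card_le (n b r : ℕ) (hb : 0 < b) (hr : r ≤ n)
    (δ : Equiv.Perm (Fin n)) (T : Finset (Fin n)) (hT : T.card = r) :
    (Finset.univ.filter
      (fun π : Equiv.Perm (Fin n) => ∀ i ∉ T, blk b (π i) = blk b (δ i))).card ≤
      r.factorial * b ^ (n - r) := by
  classical
  set S : Equiv.Perm (Fin n) → Finset (Fin n) := fun π => ((Tᶜ).image π)ᶜ with hSdef
  have hmem : ∀ (π : Equiv.Perm (Fin n)) (i : Fin n), i ∈ T ↔ π i ∈ S π := by
    intro π i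
    rw [hSdef, Finset.mem_compl]
    constructor
    · intro hi h
      obtain ⟨a, ha, hpa⟩ := Finset.mem_image.mp h
      exact Finset.mem_compl.mp ha (by rwa [π.injective hpa])
    · intro h
      by_contra hi
      exact h (Finset.mem_image.mpr ⟨i, Finset.mem_compl.mpr hi, rfl⟩)
  have hS : ∀ π : Equiv.Perm (Fin n), (S π).card = r := by
    intro π
    have h1 : ((Tᶜ).image π).card = Tᶜ.card :=
      Finset.card_image_of_injective _ π.injective
    have h2 : Tᶜ.card = n - r := by
      rw [Finset.card_compl, hT, Fintype.card_fin]
    rw [hSdef]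
    simp only [Finset.card_compl, h1, h2, Fintype.card_fin]
    omega
  let F : Equiv.Perm (Fin n) →
      ((↥(Tᶜ : Finset (Fin n)) → Fin b) × Equiv.Perm (Fin r)) :=
    fun π =>
      (fun i => ⟨(π i.1).val % b, Nat.mod_lt _ hb⟩,
       ((T.orderIsoOfFin hT).toEquiv.trans
         ((π.subtypeEquiv (fun i => hmem π i)).trans
           ((S π).orderIsoOfFin (hS π)).symm.toEquiv)))
  have key : ∀ (π : Equiv.Perm (Fin n)) (k : Fin r),
      (((S π).orderIsoOfFin (hS π)) ((F π).2 k) : Fin n) =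
        π ((T.orderIsoOfFin hT) k : Fin n) := by
    intro π k
    simp [F, Equiv.subtypeEquiv]
  have hinj : Set.InjOn F ↑(Finset.univ.filter
      (fun π : Equiv.Perm (Fin n) => ∀ i ∉ T, blk b (π i) = blk b (δ i))) := by
    intro π₁ h₁ π₂ h₂ hF
    simp only [coe_filter, Set.mem_setOf_eq] at h₁ h₂
    have hout₁ := h₁.2
    have hout₂ := h₂.2
    have hg : (F π₁).1 = (F π₂).1 := by rw [hF]
    have hσ : (F π₁).2 = (F π₂).2 := by rw [hF]
    have step1 : ∀ i ∉ T, π₁ i = π₂ i := by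
      intro i hi
      have hmod : (π₁ i).val % b = (π₂ i).val % b := by
        have := congrFun hg ⟨i, Finset.mem_compl.mpr hi⟩
        exact congrArg Fin.val this
      have hblk : blk b (π₁ i) = blk b (π₂ i) :=
        (hout₁ i hi).trans (hout₂ i hi).symm
      have hdiv : (π₁ i).val / b = (π₂ i).val / b := by
        unfold blk at hblk
        rw [Nat.add_div_right _ hb, Nat.add_div_right _ hb] at hblk
        omega
      refine Fin.ext ?_
      rw [← Nat.div_add_mod (π₁ i).val b, ← Nat.div_add_mod (π₂ i).val b, hdiv, hmod]
    have stepS : S π₁ = S π₂ := by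
      simp only [hSdef]
      congr 1
      exact Finset.image_congr (fun i hi => step1 i (Finset.mem_compl.mp hi))
    have hcoe : ∀ (s₁ s₂ : Finset (Fin n)) (h₁ : s₁.card = r) (h₂ : s₂.card = r)
        (m : Fin r), s₁ = s₂ →
        ((s₁.orderIsoOfFin h₁ m : s₁) : Fin n) = ((s₂.orderIsoOfFin h₂ m : s₂) : Fin n) := by
      rintro s₁ s₂ h₁ h₂ m rfl
      rfl
    have step2 : ∀ i ∈ T, π₁ i = π₂ i := by
      intro i hi
      set k := (T.orderIsoOfFin hT).symm ⟨i, hi⟩ with hk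
      have hek : ((T.orderIsoOfFin hT) k : Fin n) = i := by
        simp [hk]
      have k1 := key π₁ k
      have k2 := key π₂ k
      rw [hek] at k1 k2
      have : (((S π₁).orderIsoOfFin (hS π₁)) ((F π₁).2 k) : Fin n) =
          (((S π₂).orderIsoOfFin (hS π₂)) ((F π₂).2 k) : Fin n) := by
        rw [hσ]
        exact hcoe _ _ _ _ _ stepS
      rw [k1, k2] at this
      exact this
    apply Equiv.ext
    intro i
    by_cases hi : i ∈ T
    · exact step2 i hi
    · exact step1 i hi
  have hle := Finset.card_le_card_of_injOn F (fun a _ => Finset.mem_univ (F a)) hinj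
  calc (Finset.univ.filter
      (fun π : Equiv.Perm (Fin n) => ∀ i ∉ T, blk b (π i) = blk b (δ i))).card
      ≤ (Finset.univ :
          Finset ((↥(Tᶜ : Finset (Fin n)) → Fin b) × Equiv.Perm (Fin r))).card := hle
    _ = r.factorial * b ^ (n - r) := by
        rw [Finset.card_univ, Fintype.card_prod, Fintype.card_fun, Fintype.card_perm]
        have : Fintype.card ↥(Tᶜ : Finset (Fin n)) = n - r := by
          rw [Fintype.card_coe, Finset.card_compl, hT, Fintype.card_fin]
        rw [this, Fintype.card_fin, Fintype.card_fin]
        ring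

theorem ball_dEE_card_le (n b r : ℕ) (hb : 0 < b) (hbn : b ∣ n) (hr : r ≤ n)
    (δ : Equiv.Perm (Fin n)) :
    (Finset.univ.filter (fun π : Equiv.Perm (Fin n) => dEE b π δ ≤ r)).card ≤
      n.choose r * r.factorial * b ^ (n - r) := by
  classical
  have hsub : (Finset.univ.filter (fun π : Equiv.Perm (Fin n) => dEE b π δ ≤ r)) ⊆
      (Finset.powersetCard r (Finset.univ : Finset (Fin n))).biUnion
        (fun T => Finset.univ.filter
          (fun π : Equiv.Perm (Fin n) => ∀ i ∉ T, blk b (π i) = blk b (δ i))) := by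
    intro π hπ
    have hd : dEE b π δ ≤ r := (Finset.mem_filter.mp hπ).2
    obtain ⟨T, hET, hTc⟩ := Finset.exists_superset_card_eq (s :=
      Finset.univ.filter (fun i => blk b (π i) ≠ blk b (δ i))) hd
      (by rw [Fintype.card_fin]; exact hr)
    refine Finset.mem_biUnion.mpr ⟨T, ?_, ?_⟩
    · exact Finset.mem_powersetCard.mpr ⟨Finset.subset_univ _, hTc⟩
    · refine Finset.mem_filter.mpr ⟨Finset.mem_univ _, fun i hi => ?_⟩
      by_contra h
      exact hi (hET (Finset.mem_filter.mpr ⟨Finset.mem_univ _, h⟩))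
  calc (Finset.univ.filter (fun π : Equiv.Perm (Fin n) => dEE b π δ ≤ r)).card
      ≤ ((Finset.powersetCard r (Finset.univ : Finset (Fin n))).biUnion
        (fun T => Finset.univ.filter
          (fun π : Equiv.Perm (Fin n) => ∀ i ∉ T, blk b (π i) = blk b (δ i)))).card :=
        Finset.card_le_card hsub
    _ ≤ ∑ T ∈ Finset.powersetCard r (Finset.univ : Finset (Fin n)),
        (Finset.univ.filter
          (fun π : Equiv.Perm (Fin n) => ∀ i ∉ T, blk b (π i) = blk b (δ i))).card :=
        Finset.card_biUnion_le
    _ ≤ ∑ T ∈ Finset.powersetCard r (Finset.univ : Finset (Fin n)),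
        (r.factorial * b ^ (n - r)) := by
        refine Finset.sum_le_sum fun T hT => ?_
        exact fixed_set_card_le n b r hb hr δ T
          (Finset.mem_powersetCard.mp hT).2
    _ = n.choose r * r.factorial * b ^ (n - r) := by
        rw [Finset.sum_const, Finset.card_powersetCard, Finset.card_univ,
          Fintype.card_fin, smul_eq_mul, mul_assoc]
end

section
/- For block size b and any permutation π ∈ S_n, and any nonnegative integer r, the number of permutations δ with d_esp(π,δ) ≤ r satisfies |{δ ∈ S_n : d_esp(π,δ) ≤ r}| ≤ (2b)^n · C(n+r, r). -/
/-- External Spearman's footrule metric. -/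
def dESP (b : ℕ) {n : ℕ} (π δ : Equiv.Perm (Fin n)) : ℤ :=
  ∑ i : Fin n, |(blk b (π i) : ℤ) - (blk b (δ i) : ℤ)|

theorem ball_dESP_card_le (n b r : ℕ) (hb : 0 < b) (π : Equiv.Perm (Fin n)) :
    (Finset.univ.filter
        (fun δ : Equiv.Perm (Fin n) => dESP b π δ ≤ (r : ℤ))).card ≤
      (2 * b) ^ n * (n + r).choose r := by
  classical
  -- the absolute block displacement at position i
  set a : Equiv.Perm (Fin n) → Fin n → ℕ :=
    fun δ i => ((blk b (π i) : ℤ) - (blk b (δ i) : ℤ)).natAbs with ha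
  have hsum : ∀ δ : Equiv.Perm (Fin n), dESP b π δ ≤ (r : ℤ) → ∑ i, a δ i ≤ r := by
    intro δ hδ
    have : ((∑ i, a δ i : ℕ) : ℤ) ≤ (r : ℤ) := by
      push_cast
      calc (∑ i, (a δ i : ℤ)) = dESP b π δ := by
            unfold dESP
            refine Finset.sum_congr rfl fun i _ => ?_
            rw [ha]
            exact (Int.abs_eq_natAbs _).symm
        _ ≤ (r : ℤ) := hδ
    exact_mod_cast this
  -- the encoding map
  set F : Equiv.Perm (Fin n) → (Fin n → Fin (2 * b)) × Multiset (Fin (n + 1)) :=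
    fun δ =>
      (fun i => ⟨(δ i).val % b + (if blk b (δ i) ≤ blk b (π i) then 0 else b), by
          have := Nat.mod_lt (δ i).val hb
          split <;> omega⟩,
       (∑ i : Fin n, Multiset.replicate (a δ i) (Fin.castSucc i)) +
         Multiset.replicate (r - ∑ i, a δ i) (Fin.last n)) with hF
  have hcount : ∀ δ (j : Fin n), Multiset.count (Fin.castSucc j) (F δ).2 = a δ j := by
    intro δ j
    rw [hF]
    have hlast : ¬ (Fin.last n = Fin.castSucc j) := by
      simp [Fin.ext_iff]
      omega
    simp only [Multiset.count_add, Multiset.count_sum', Multiset.count_replicate,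
      Fin.castSucc_inj, hlast, if_false]
    rw [Finset.sum_ite_eq' Finset.univ j (fun i => a δ i)]
    simp
  have hcard : ∀ δ : Equiv.Perm (Fin n), dESP b π δ ≤ (r : ℤ) →
      Multiset.card (F δ).2 = r := by
    intro δ hδ
    have hcs : ∀ (s : Finset (Fin n)) (f : Fin n → Multiset (Fin (n + 1))),
        Multiset.card (∑ i ∈ s, f i) = ∑ i ∈ s, Multiset.card (f i) := by
      intro s f
      induction s using Finset.cons_induction <;> simp [*]
    rw [hF]
    simp only [Multiset.card_add, Multiset.card_replicate, hcs]
    have := hsum δ hδ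
    omega
  -- value reconstruction
  have hval : ∀ x : Fin n, x.val = b * (blk b x - 1) + x.val % b := by
    intro x
    have h1 : blk b x = x.val / b + 1 := by
      simp [blk, Nat.add_div_right _ hb]
    rw [h1]
    simp [Nat.div_add_mod]
  -- injectivity on the ball
  have hinj : Set.InjOn F
      ((Finset.univ.filter
        (fun δ : Equiv.Perm (Fin n) => dESP b π δ ≤ (r : ℤ))) : Set (Equiv.Perm (Fin n))) := by
    intro δ hδ δ' hδ' hFeq
    ext i
    -- equal absolute displacements
    have haa : a δ i = a δ' i := by
      rw [← hcount δ i, ← hcount δ' i, hFeq]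
    -- equal first components
    have h1 : (F δ).1 i = (F δ').1 i := by rw [hFeq]
    rw [hF] at h1
    simp only [Fin.mk.injEq] at h1
    have hm1 : (δ i).val % b < b := Nat.mod_lt _ hb
    have hm2 : (δ' i).val % b < b := Nat.mod_lt _ hb
    -- same sign condition and same residue
    have haa' : ((blk b (π i) : ℤ) - (blk b (δ i) : ℤ)).natAbs
        = ((blk b (π i) : ℤ) - (blk b (δ' i) : ℤ)).natAbs := by
      have := haa; rw [ha] at this; exact this
    by_cases hc1 : blk b (δ i) ≤ blk b (π i) <;>
      by_cases hc2 : blk b (δ' i) ≤ blk b (π i) <;>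
      simp only [hc1, hc2, if_true, if_false, if_pos, if_neg, not_false_iff] at h1 <;>
      [skip; (exfalso; omega); (exfalso; omega); skip] <;>
      · have hblk : blk b (δ i) = blk b (δ' i) := by omega
        have hres : (δ i).val % b = (δ' i).val % b := by omega
        rw [hval (δ i), hval (δ' i), hblk, hres]
  -- the target finset
  have hmem : ∀ δ ∈ (Finset.univ.filter
        (fun δ : Equiv.Perm (Fin n) => dESP b π δ ≤ (r : ℤ))),
      F δ ∈ (Finset.univ : Finset (Fin n → Fin (2 * b))) ×ˢ
        ((Finset.univ : Finset (Sym (Fin (n + 1)) r)).image Sym.toMultiset) := by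
    intro δ hδ
    rw [Finset.mem_filter] at hδ
    rw [Finset.mem_product]
    refine ⟨Finset.mem_univ _, ?_⟩
    rw [Finset.mem_image]
    exact ⟨⟨(F δ).2, hcard δ hδ.2⟩, Finset.mem_univ _, rfl⟩
  calc (Finset.univ.filter
        (fun δ : Equiv.Perm (Fin n) => dESP b π δ ≤ (r : ℤ))).card
      ≤ ((Finset.univ : Finset (Fin n → Fin (2 * b))) ×ˢ
        ((Finset.univ : Finset (Sym (Fin (n + 1)) r)).image Sym.toMultiset)).card :=
        Finset.card_le_card_of_injOn F hmem hinj
    _ ≤ (2 * b) ^ n * (n + r).choose r := by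
        rw [Finset.card_product]
        apply Nat.mul_le_mul
        · rw [Finset.card_univ]
          simp [Fintype.card_fun]
        · calc ((Finset.univ : Finset (Sym (Fin (n + 1)) r)).image Sym.toMultiset).card
              ≤ (Finset.univ : Finset (Sym (Fin (n + 1)) r)).card :=
                Finset.card_image_le
            _ = (n + r).choose r := by
                rw [Finset.card_univ, Sym.card_sym_eq_choose]
                simp
end

section
/- Let d be a right-invariant metric on S_n taking nonnegative integer values, and let C ⊆ S_n be a code such that the average distortion satisfies (1/n!)·Σ_{π∈S_n} d(π,C) ≤ r for an integer r ≥ 0. Then |C| ≥ n!/(|Ball(r)|·(r+1)). -/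
theorem average_distortion_code_lower_bound (n r : ℕ)
    (d : Equiv.Perm (Fin n) → Equiv.Perm (Fin n) → ℕ)
    (hinv : ∀ π δ θ : Equiv.Perm (Fin n), d (π * θ) (δ * θ) = d π δ)
    (C : Finset (Equiv.Perm (Fin n))) (hC : C.Nonempty)
    (havg : (∑ π : Equiv.Perm (Fin n), (C.inf' hC (fun δ => d π δ) : ℝ)) /
        n.factorial ≤ r) :
    (n.factorial : ℝ) /
        ((Finset.univ.filter (fun π : Equiv.Perm (Fin n) => d π 1 ≤ r)).card * (r + 1)) ≤
      C.card := by
  classical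
  set B := (Finset.univ.filter (fun π : Equiv.Perm (Fin n) => d π 1 ≤ r)).card with hB
  -- shifted balls all have card B
  have hshift : ∀ δ : Equiv.Perm (Fin n),
      (Finset.univ.filter (fun π => d π δ ≤ r)).card = B := by
    intro δ
    apply Finset.card_bij' (fun π _ => π * δ⁻¹) (fun π _ => π * δ)
    · intro π hπ
      simp only [Finset.mem_filter, Finset.mem_univ, true_and] at hπ ⊢
      have h := hinv (π * δ⁻¹) 1 δ
      simp only [inv_mul_cancel_right, one_mul] at h
      omega
    · intro π hπ
      simp only [Finset.mem_filter, Finset.mem_univ, true_and] at hπ ⊢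
      have h := hinv π 1 δ
      simp only [one_mul] at h
      omega
    · intro π _; group
    · intro π _; group
  set covered := Finset.univ.filter
      (fun π : Equiv.Perm (Fin n) => C.inf' hC (fun δ => d π δ) ≤ r) with hcov
  set unc := Finset.univ.filter
      (fun π : Equiv.Perm (Fin n) => ¬ C.inf' hC (fun δ => d π δ) ≤ r) with hunc
  have hcovbound : covered.card ≤ C.card * B := by
    have hsub : covered ⊆ C.biUnion (fun δ => Finset.univ.filter (fun π => d π δ ≤ r)) := by
      intro π hπ
      simp only [hcov, Finset.mem_filter, Finset.mem_univ, true_and] at hπ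
      obtain ⟨δ, hδC, hδ⟩ := C.exists_mem_eq_inf' hC (fun δ => d π δ)
      exact Finset.mem_biUnion.2 ⟨δ, hδC, by
        simp only [Finset.mem_filter, Finset.mem_univ, true_and]; omega⟩
    calc covered.card ≤ _ := Finset.card_le_card hsub
      _ ≤ ∑ δ ∈ C, (Finset.univ.filter (fun π => d π δ ≤ r)).card :=
          Finset.card_biUnion_le
      _ = C.card * B := by simp [hshift, Finset.sum_const, mul_comm]
  have hsplit : covered.card + unc.card = Nat.factorial n := by
    rw [hcov, hunc, Finset.card_filter_add_card_filter_not]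
    simp [Fintype.card_perm]
  have hsumlow : (r + 1) * unc.card ≤ ∑ π : Equiv.Perm (Fin n),
      C.inf' hC (fun δ => d π δ) := by
    calc (r + 1) * unc.card = ∑ _π ∈ unc, (r + 1) := by
          rw [Finset.sum_const, smul_eq_mul, mul_comm]
      _ ≤ ∑ π ∈ unc, C.inf' hC (fun δ => d π δ) := by
          apply Finset.sum_le_sum
          intro π hπ
          simp only [hunc, Finset.mem_filter, Finset.mem_univ, true_and] at hπ
          omega
      _ ≤ _ := Finset.sum_le_sum_of_subset (Finset.subset_univ _)
  have hfacpos : (0 : ℝ) < n.factorial := by positivity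
  have hS : (∑ π : Equiv.Perm (Fin n), (C.inf' hC (fun δ => d π δ) : ℝ)) ≤
      r * n.factorial := by
    rw [div_le_iff₀ hfacpos] at havg
    linarith
  -- combine, cast to ℝ
  have hkey : (n.factorial : ℝ) ≤ C.card * B * (r + 1) := by
    have h1 : ((r : ℝ) + 1) * unc.card ≤ r * n.factorial := by
      calc ((r : ℝ) + 1) * unc.card = ((r + 1) * unc.card : ℕ) := by push_cast; ring
        _ ≤ (∑ π : Equiv.Perm (Fin n), (C.inf' hC (fun δ => d π δ) : ℕ) : ℝ) := by
            exact_mod_cast hsumlow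
        _ = ∑ π : Equiv.Perm (Fin n), (C.inf' hC (fun δ => d π δ) : ℝ) := by push_cast; rfl
        _ ≤ r * n.factorial := hS
    have h2 : (covered.card : ℝ) + unc.card = n.factorial := by exact_mod_cast hsplit
    have h3 : (covered.card : ℝ) ≤ C.card * B := by exact_mod_cast hcovbound
    nlinarith [h1, h2, h3]
  rcases Nat.eq_zero_or_pos B with hB0 | hBpos
  · rw [hB0]
    simp
  · rw [div_le_iff₀ (by positivity)]
    calc (n.factorial : ℝ) ≤ C.card * B * (r + 1) := hkey
      _ = C.card * (B * (r + 1)) := by ring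
end
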